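/- arXiv:1206.3744 — 5 statements merged into one kernel-verified Lean document; each statement's English description precedes it below -/
import Mathlib

section
/- Let F be a field, f(t) = t^n + c_{n-1}t^{n-1} + ... + c_0 a monic polynomial over F, and d_1,...,d_n elements of F with d_1 + ... + d_n = -c_{n-1}. Then there exists a sequence b_1,...,b_{n-1} in F such that f(t) is the characteristic polynomial of the n×n matrix A with diagonal entries A_{ii} = d_i, subdiagonal entries A_{i+1,i} = 1 for 1 ≤ i ≤ n-1, last column entries A_{i,n} = b_i for 1 ≤ i ≤ n-1, and all other entries zero. -/
open Polynomial Matrix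

/-- The matrix with diagonal `d`, subdiagonal entries `1`, last column
entries `b` above the diagonal, and zeros elsewhere. -/
def matA {F : Type*} [Field F] (n : ℕ) (d : Fin n → F) (b : Fin (n - 1) → F) :
    Matrix (Fin n) (Fin n) F :=
  Matrix.of fun i j =>
    if i = j then d i
    else if (i : ℕ) = (j : ℕ) + 1 then 1
    else if (j : ℕ) = n - 1 then (if h : (i : ℕ) < n - 1 then b ⟨i, h⟩ else 0)
    else 0

private lemma key {F : Type*} [Field F] : ∀ m : ℕ, ∀ (d : Fin (m + 1) → F) (f : F[X]),
    f.Monic → f.natDegree = m + 1 → f.coeff m = -∑ i, d i →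
    ∃ b : Fin m → F, (matA (m + 1) d b).charpoly = f := by
  intro m
  induction m with
  | zero =>
    intro d f hmon hdeg hco
    refine ⟨fun i => 0, ?_⟩
    have hf : f = X + C (f.coeff 0) := hmon.eq_X_add_C hdeg
    have h1 : (matA 1 d (fun i => 0)).charpoly = X - C (d 0) := by
      rw [Matrix.charpoly, Matrix.det_fin_one, charmatrix_apply_eq]
      simp [matA]
    rw [h1, hf, hco]
    simp [sub_eq_add_neg]
  | succ m IH =>
    intro d f hmon hdeg hco
    set d0 := d 0 with hd0
    set q := f /ₘ (X - C d0) with hqdef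
    set r := f.eval d0 with hrdef
    have hfq : f = (X - C d0) * q + C r := by
      conv_lhs => rw [← modByMonic_add_div f (X - C d0)]
      rw [modByMonic_X_sub_C_eq_C_eval]
      ring
    have hdegf : f.degree ≠ 0 := by
      rw [degree_eq_natDegree hmon.ne_zero, hdeg]
      exact_mod_cast Nat.succ_ne_zero (m + 1)
    have hqmon : q.Monic := by
      unfold Monic
      rw [hqdef, leadingCoeff_divByMonic_X_sub_C f hdegf d0, hmon.leadingCoeff]
    have hqdeg : q.natDegree = m + 1 := by
      rw [hqdef, natDegree_divByMonic f (monic_X_sub_C d0), hdeg, natDegree_X_sub_C]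
      omega
    have hqco : q.coeff m = -∑ i : Fin (m + 1), d i.succ := by
      have h1 : f.coeff (m + 1) = q.coeff m - d0 * q.coeff (m + 1) := by
        conv_lhs => rw [hfq]
        rw [coeff_add, sub_mul, coeff_sub, coeff_X_mul, coeff_C_mul, coeff_C]
        simp
      have h2 : q.coeff (m + 1) = 1 := by
        have := hqmon.coeff_natDegree
        rwa [hqdeg] at this
      have h3 : ∑ i, d i = d0 + ∑ i : Fin (m + 1), d i.succ := Fin.sum_univ_succ d
      rw [h2, mul_one] at h1
      rw [hco, h3] at h1
      linear_combination -h1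
    obtain ⟨b', hb'⟩ := IH (fun i => d i.succ) q hqmon hqdeg hqco
    set b : Fin (m + 1) → F := fun k =>
      if h : 0 < (k : ℕ) then b' ⟨(k : ℕ) - 1, by omega⟩ else -r with hbdef
    refine ⟨b, ?_⟩
    have hsub : (charmatrix (matA (m + 2) d b)).submatrix Fin.succ Fin.succ =
        charmatrix (matA (m + 1) (fun i => d i.succ) b') := by
      ext i j
      rw [Matrix.submatrix_apply]
      rcases eq_or_ne i j with h | h
      · subst h
        rw [charmatrix_apply_eq, charmatrix_apply_eq]
        simp [matA]
      · rw [charmatrix_apply_ne _ _ _ (fun hc => h (Fin.succ_inj.mp hc)),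
          charmatrix_apply_ne _ _ _ h]
        have hAB : matA (m + 2) d b i.succ j.succ =
            matA (m + 1) (fun i => d i.succ) b' i j := by
          have hi := i.isLt
          have hj := j.isLt
          simp only [matA, Matrix.of_apply]
          rw [if_neg (fun hc => h (Fin.succ_inj.mp hc)), if_neg h]
          by_cases h2 : (i : ℕ) = (j : ℕ) + 1
          · rw [if_pos (by simp only [Fin.val_succ]; omega), if_pos h2]
          · rw [if_neg (by simp only [Fin.val_succ]; omega), if_neg h2]
            by_cases h3 : (j : ℕ) = m
            · rw [if_pos (by simp only [Fin.val_succ]; omega), if_pos (by omega)]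
              by_cases h4 : (i : ℕ) < m
              · rw [dif_pos (by simp only [Fin.val_succ]; omega), dif_pos (by omega)]
                rw [hbdef]
                simp only [Fin.val_succ]
                rw [dif_pos (by omega)]
                rfl
              · rw [dif_neg (by simp only [Fin.val_succ]; omega), dif_neg (by omega)]
            · rw [if_neg (by simp only [Fin.val_succ]; omega), if_neg (by omega)]
        rw [hAB]
    have hlastdet :
        ((charmatrix (matA (m + 2) d b)).submatrix Fin.succ
          (Fin.last (m + 1)).succAbove).det = (-1 : F[X]) ^ (m + 1) := by
      rw [Fin.succAbove_last]
      have htri : Matrix.BlockTriangular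
          ((charmatrix (matA (m + 2) d b)).submatrix Fin.succ Fin.castSucc) id := by
        intro i j hij
        have hi := i.isLt
        have hj := j.isLt
        have hij' : (j : ℕ) < (i : ℕ) := hij
        rw [Matrix.submatrix_apply, charmatrix_apply_ne _ _ _
          (by simp only [ne_eq, Fin.ext_iff, Fin.val_succ, Fin.coe_castSucc]; omega)]
        have hz : matA (m + 2) d b i.succ j.castSucc = 0 := by
          simp only [matA, Matrix.of_apply]
          rw [if_neg (by simp only [ne_eq, Fin.ext_iff, Fin.val_succ, Fin.coe_castSucc]; omega),
            if_neg (by simp only [Fin.val_succ, Fin.coe_castSucc]; omega),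
            if_neg (by simp only [Fin.coe_castSucc]; omega)]
        rw [hz, map_zero, neg_zero]
      rw [Matrix.det_of_upperTriangular htri]
      have hdiag : ∀ i : Fin (m + 1),
          ((charmatrix (matA (m + 2) d b)).submatrix Fin.succ Fin.castSucc) i i = -1 := by
        intro i
        have hi := i.isLt
        rw [Matrix.submatrix_apply, charmatrix_apply_ne _ _ _
          (by simp only [ne_eq, Fin.ext_iff, Fin.val_succ, Fin.coe_castSucc]; omega)]
        have ho : matA (m + 2) d b i.succ i.castSucc = 1 := by
          simp only [matA, Matrix.of_apply]
          rw [if_neg (by simp only [ne_eq, Fin.ext_iff, Fin.val_succ, Fin.coe_castSucc]; omega),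
            if_pos (by simp only [Fin.val_succ, Fin.coe_castSucc])]
        rw [ho, Polynomial.C_1]
      calc ∏ i : Fin (m + 1),
            ((charmatrix (matA (m + 2) d b)).submatrix Fin.succ Fin.castSucc) i i
          = ∏ i : Fin (m + 1), (-1 : F[X]) := Finset.prod_congr rfl (fun i _ => hdiag i)
        _ = (-1 : F[X]) ^ (m + 1) := by simp
    have hexp := Matrix.det_succ_row_zero (n := m + 1) (charmatrix (matA (m + 2) d b))
    have hzero : ∀ j : Fin (m + 1), j ≠ Fin.last m →
        charmatrix (matA (m + 2) d b) 0 j.succ = 0 := by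
      intro j hj
      have hjv : (j : ℕ) < m := by
        have h1 := j.isLt
        rcases Nat.lt_succ_iff_lt_or_eq.mp h1 with h | h
        · exact h
        · exact absurd (Fin.ext (by simpa [Fin.val_last] using h)) hj
      rw [charmatrix_apply_ne _ _ _
        (by simp only [ne_eq, Fin.ext_iff, Fin.val_succ, Fin.val_zero]; omega)]
      have hz : matA (m + 2) d b 0 j.succ = 0 := by
        simp only [matA, Matrix.of_apply]
        rw [if_neg (by simp only [ne_eq, Fin.ext_iff, Fin.val_succ, Fin.val_zero]; omega),
          if_neg (by simp only [Fin.val_succ, Fin.val_zero]; omega),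
          if_neg (by simp only [Fin.val_succ]; omega)]
      rw [hz, map_zero, neg_zero]
    have hsum : ∑ j : Fin (m + 1),
        ((-1 : F[X]) ^ ((j.succ : Fin (m + 2)) : ℕ) *
          charmatrix (matA (m + 2) d b) 0 j.succ *
          ((charmatrix (matA (m + 2) d b)).submatrix Fin.succ
            (j.succ : Fin (m + 2)).succAbove).det) = C r := by
      rw [Finset.sum_eq_single (Fin.last m)]
      · have hsucc : (Fin.last m).succ = Fin.last (m + 1) := Fin.succ_last m
        rw [hsucc, hlastdet]
        have hentry : charmatrix (matA (m + 2) d b) 0 (Fin.last (m + 1)) = C r := by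
          rw [charmatrix_apply_ne _ _ _
            (by simp only [ne_eq, Fin.ext_iff, Fin.val_zero, Fin.val_last]; omega)]
          have hz : matA (m + 2) d b 0 (Fin.last (m + 1)) = -r := by
            simp only [matA, Matrix.of_apply]
            rw [if_neg (by simp only [ne_eq, Fin.ext_iff, Fin.val_zero, Fin.val_last]; omega),
              if_neg (by simp only [Fin.val_zero, Fin.val_last]; omega),
              if_pos (by simp only [Fin.val_last]; omega), dif_pos (by simp only [Fin.val_zero]; omega)]
            rw [hbdef]
            simp
          rw [hz, map_neg, neg_neg]
        rw [hentry]
        have : ((Fin.last (m + 1) : Fin (m + 2)) : ℕ) = m + 1 := rfl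
        rw [this]
        rw [mul_right_comm, ← pow_add]
        have h1 : (-1 : F[X]) ^ (m + 1 + (m + 1)) = 1 := by
          rw [show m + 1 + (m + 1) = 2 * (m + 1) by ring, pow_mul]
          norm_num
        rw [h1, one_mul]
      · intro j _ hj
        rw [hzero j hj, mul_zero, zero_mul]
      · intro h
        exact absurd (Finset.mem_univ _) h
    rw [Matrix.charpoly, hexp, Fin.sum_univ_succ, hsum]
    have h00 : charmatrix (matA (m + 2) d b) 0 0 = X - C d0 := by
      rw [charmatrix_apply_eq]
      simp [matA, hd0]
    rw [h00, Fin.succAbove_zero, hsub]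
    have : (charmatrix (matA (m + 1) (fun i => d i.succ) b')).det = q := hb'
    rw [this]
    simp only [Fin.val_zero, pow_zero, one_mul]
    rw [← hfq]

theorem stmt0 {F : Type*} [Field F] (n : ℕ) (hn : 1 ≤ n)
    (c : Fin n → F) (d : Fin n → F)
    (hd : ∑ i, d i = -c ⟨n - 1, by omega⟩) :
    ∃ b : Fin (n - 1) → F,
      (matA n d b).charpoly = X ^ n + ∑ i : Fin n, C (c i) * X ^ (i : ℕ) := by
  obtain ⟨m, rfl⟩ : ∃ m, n = m + 1 := ⟨n - 1, by omega⟩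
  set f : F[X] := X ^ (m + 1) + ∑ i : Fin (m + 1), C (c i) * X ^ (i : ℕ) with hfdef
  have hgdeg : (∑ i : Fin (m + 1), C (c i) * X ^ (i : ℕ)).degree < ((m + 1 : ℕ) : WithBot ℕ) := by
    apply lt_of_le_of_lt (degree_sum_le _ _)
    rw [Finset.sup_lt_iff (by exact_mod_cast WithBot.bot_lt_coe (m + 1))]
    intro i _
    apply lt_of_le_of_lt (degree_C_mul_X_pow_le _ _)
    exact_mod_cast i.isLt
  have hmon : f.Monic := monic_X_pow_add hgdeg
  have hdeg : f.natDegree = m + 1 := by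
    have hdf : f.degree = (m + 1 : ℕ) := by
      rw [hfdef, degree_add_eq_left_of_degree_lt (by rwa [degree_X_pow]), degree_X_pow]
    exact natDegree_eq_of_degree_eq_some hdf
  have hco : f.coeff m = -∑ i, d i := by
    rw [hfdef, coeff_add, coeff_X_pow, if_neg (by omega), finset_sum_coeff]
    have : ∀ i : Fin (m + 1), (C (c i) * X ^ (i : ℕ)).coeff m =
        if i = Fin.last m then c i else 0 := by
      intro i
      rw [coeff_C_mul, coeff_X_pow]
      by_cases h : i = Fin.last m
      · rw [if_pos h, if_pos (by rw [h]; rfl), mul_one]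
      · rw [if_neg h, if_neg (by
          intro hc
          exact h (Fin.ext (by simpa [Fin.val_last] using hc.symm))), mul_zero]
    rw [Finset.sum_congr rfl (fun i _ => this i), Finset.sum_ite_eq' _ (Fin.last m)]
    simp only [Finset.mem_univ, if_pos, zero_add]
    have : c (Fin.last m) = c ⟨m + 1 - 1, by omega⟩ := rfl
    rw [this, hd, neg_neg]
  obtain ⟨b, hb⟩ := key m d f hmon hdeg hco
  exact ⟨b, hb⟩
end

section
/- Let F be a field, n ≥ 1, and let A be the n×n matrix over F whose diagonal is (d_1,...,d_n), whose subdiagonal entries equal 1, whose last column above the diagonal is (b_1,...,b_{n-1}), and zero elsewhere. Fix k with 1 ≤ k ≤ n-1. If S ⊆ {1,...,n} with |S| ≤ n-k+1 and the variable b_k occurs in the principal minor det(A_S) (i.e., det(A_S), viewed as a polynomial in b_1,...,b_{n-1}, depends on b_k), then S = {k, k+1, ..., n}. -/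
open MvPolynomial

/-- The matrix over `F[b_1,…,b_{n-1}]` with diagonal `d` (as constants),
subdiagonal entries `1`, last column entries the variables `b_i` above the
diagonal, and zeros elsewhere. -/
noncomputable def matAmv {F : Type*} [Field F] (n : ℕ) (d : Fin n → F) :
    Matrix (Fin n) (Fin n) (MvPolynomial (Fin (n - 1)) F) :=
  Matrix.of fun i j =>
    if i = j then C (d i)
    else if (i : ℕ) = (j : ℕ) + 1 then 1
    else if (j : ℕ) = n - 1 then (if h : (i : ℕ) < n - 1 then X ⟨i, h⟩ else 0)
    else 0

lemma matAmv_vars {F : Type*} [Field F] (n : ℕ) (d : Fin n → F) (k : Fin (n-1))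
    (r c : Fin n) (h : k ∈ (matAmv n d r c).vars) :
    (r : ℕ) = (k : ℕ) ∧ (c : ℕ) = n - 1 := by
  unfold matAmv at h
  simp only [Matrix.of_apply] at h
  split_ifs at h with h1 h2 h3 h4
  · simp [vars_C] at h
  · simp [vars_one] at h
  · rw [vars_X] at h
    simp only [Finset.mem_singleton] at h
    subst h
    exact ⟨rfl, h3⟩
  · simp [vars_0] at h
  · simp [vars_0] at h

lemma matAmv_nz {F : Type*} [Field F] (n : ℕ) (d : Fin n → F)
    (r c : Fin n) (h : matAmv n d r c ≠ 0) :
    r = c ∨ (r : ℕ) = (c : ℕ) + 1 ∨ (c : ℕ) = n - 1 := by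
  unfold matAmv at h
  simp only [Matrix.of_apply] at h
  split_ifs at h with h1 h2 h3 <;> tauto

theorem stmt2 {F : Type*} [Field F] (n : ℕ) (hn : 1 ≤ n) (d : Fin n → F)
    (k : Fin (n - 1)) (S : Finset (Fin n))
    (hcard : S.card ≤ n - (k : ℕ))
    (hvar : k ∈ (Matrix.det ((matAmv n d).submatrix
        (fun i : S => (i : Fin n)) (fun j : S => (j : Fin n)))).vars) :
    S = Finset.univ.filter (fun i : Fin n => (k : ℕ) ≤ (i : ℕ)) := by
  classical
  have hk : (k : ℕ) < n - 1 := k.isLt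
  rw [Matrix.det_apply'] at hvar
  obtain ⟨σ, -, hσ⟩ := Finset.mem_biUnion.mp (vars_sum_subset _ _ hvar)
  set f : S → MvPolynomial (Fin (n-1)) F := fun i => matAmv n d (↑(σ i)) (↑i) with hf
  have hε : ((↑(Equiv.Perm.sign σ) : ℤ) : MvPolynomial (Fin (n-1)) F).vars = ∅ := by
    rcases Int.units_eq_one_or (Equiv.Perm.sign σ) with h | h <;>
      · rw [h]
        simp [vars_one]
  have hprod : k ∈ (∏ i, f i).vars := by
    have := vars_mul _ _ hσ
    rw [Finset.mem_union, hε] at this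
    rcases this with h | h
    · simp at h
    · exact h
  have hne : (∏ i, f i) ≠ 0 := fun h0 => by rw [h0, vars_0] at hprod; simp at hprod
  have hfac : ∀ i : S, f i ≠ 0 := fun i =>
    Finset.prod_ne_zero_iff.mp hne i (Finset.mem_univ i)
  have hopt : ∀ i : S, σ i = i ∨ (↑(σ i) : ℕ) = (↑i : ℕ) + 1 ∨ (↑i : ℕ) = n - 1 := by
    intro i
    rcases matAmv_nz n d _ _ (hfac i) with h | h
    · exact Or.inl (Subtype.ext h)
    · exact Or.inr h
  obtain ⟨i0, -, hi0⟩ := Finset.mem_biUnion.mp (vars_prod f hprod)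
  obtain ⟨hrow, hcol⟩ := matAmv_vars n d k _ _ hi0
  -- hrow : ↑↑(σ i0) = ↑k, hcol : ↑↑i0 = n - 1
  have hinj : Function.Injective σ := σ.injective
  -- chain claim
  have claim : ∀ t : ℕ, (k : ℕ) + t + 1 ≤ n - 1 →
      ∃ e : S, (↑(e : Fin n) : ℕ) = (k : ℕ) + t ∧
        (↑(σ e : Fin n) : ℕ) = (k : ℕ) + t + 1 := by
    intro t
    induction t with
    | zero =>
      intro ht
      refine ⟨σ i0, by simpa using hrow, ?_⟩
      rcases hopt (σ i0) with h | h | h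
      · have h2 := hinj h
        rw [h2] at hrow
        omega
      · rw [h, hrow]
      · rw [hrow] at h; omega
    | succ t ih =>
      intro ht
      obtain ⟨e, he, hσe⟩ := ih (by omega)
      refine ⟨σ e, by omega, ?_⟩
      rcases hopt (σ e) with h | h | h
      · have h2 := hinj h
        have h3 : ((e : Fin n) : ℕ) = ((σ e : Fin n) : ℕ) := by rw [h2]
        omega
      · rw [h, hσe]; omega
      · rw [hσe] at h; omega
  have hmem : ∀ m : ℕ, (k : ℕ) ≤ m → (hm : m < n) → (⟨m, hm⟩ : Fin n) ∈ S := by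
    intro m hkm hm
    by_cases hlast : m = n - 1
    · have heq : (⟨m, hm⟩ : Fin n) = (i0 : Fin n) := by
        apply Fin.ext
        show m = _
        omega
      rw [heq]; exact Finset.coe_mem i0
    · have hm1 : m + 1 ≤ n - 1 := by omega
      by_cases hmk : m = (k : ℕ)
      · obtain ⟨e, he, -⟩ := claim 0 (by omega)
        have heq : (⟨m, hm⟩ : Fin n) = (e : Fin n) := by
          apply Fin.ext
          show m = _
          omega
        rw [heq]; exact Finset.coe_mem e
      · have hkm' : (k : ℕ) < m := lt_of_le_of_ne hkm (Ne.symm hmk)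
        obtain ⟨e, -, hσe⟩ := claim (m - (k : ℕ) - 1) (by omega)
        have heq : (⟨m, hm⟩ : Fin n) = ((σ e : S) : Fin n) := by
          apply Fin.ext
          show m = _
          omega
        rw [heq]; exact Finset.coe_mem (σ e)
  have hsub : Finset.univ.filter (fun i : Fin n => (k : ℕ) ≤ (i : ℕ)) ⊆ S := by
    intro i hi
    rw [Finset.mem_filter] at hi
    have : (⟨(i : ℕ), i.2⟩ : Fin n) = i := Fin.ext rfl
    rw [← this]
    exact hmem _ hi.2 i.2
  have hcardf : (Finset.univ.filter (fun i : Fin n => (k : ℕ) ≤ (i : ℕ))).card = n - (k : ℕ) := by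
    have heq : Finset.univ.filter (fun i : Fin n => (k : ℕ) ≤ (i : ℕ)) =
        Finset.Ici (⟨(k : ℕ), by omega⟩ : Fin n) := by
      ext i
      simp [Fin.le_def]
    rw [heq, Fin.card_Ici]
  exact (Finset.eq_of_subset_of_card_le hsub (hcardf ▸ hcard)).symm
end

section
/- Let F be a field, n ≥ 1, and let A be the n×n matrix over the polynomial ring F[b_1,...,b_{n-1}] with diagonal (d_1,...,d_n) (elements of F), subdiagonal entries 1, last column above the diagonal (b_1,...,b_{n-1}), and zero elsewhere. For each k with 1 ≤ k ≤ n-1, the sum of all principal minors of A of size n-k+1 equals (-1)^{n-k} b_k + g_k, where g_k is a polynomial depending only on b_{k+1},...,b_{n-1}. -/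
open MvPolynomial

/-- A Finsupp with positive value at `j` and total sum ≤ 1 is `single j 1`. -/
lemma finsupp_eq_single_of_sum_le {σ : Type*} [DecidableEq σ] (v : σ →₀ ℕ) (j : σ)
    (h1 : v j ≠ 0) (h2 : (v.sum fun _ e => e) ≤ 1) : v = Finsupp.single j 1 := by
  have hsum : v.sum (fun _ e => e) = ∑ i ∈ v.support, v i := rfl
  have hj : j ∈ v.support := Finsupp.mem_support_iff.2 h1
  ext i
  rcases eq_or_ne i j with rfl | hij
  · have hle : v i ≤ ∑ x ∈ v.support, v x := Finset.single_le_sum (fun _ _ => Nat.zero_le _) hj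
    have : v i ≤ 1 := hle.trans (hsum ▸ h2)
    have : 1 ≤ v i := Nat.one_le_iff_ne_zero.2 h1
    simp [Finsupp.single_eq_same]
    omega
  · simp only [Finsupp.single_eq_of_ne' (Ne.symm hij)]
    by_contra hne
    have hi : i ∈ v.support := Finsupp.mem_support_iff.2 hne
    have hsub : ({i, j} : Finset σ) ⊆ v.support := by
      intro x hx
      simp only [Finset.mem_insert, Finset.mem_singleton] at hx
      rcases hx with rfl | rfl <;> assumption
    have h2' : ∑ x ∈ ({i, j} : Finset σ), v x ≤ ∑ x ∈ v.support, v x :=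
      Finset.sum_le_sum_of_subset hsub
    rw [Finset.sum_pair hij] at h2'
    have : 1 ≤ v i := Nat.one_le_iff_ne_zero.2 hne
    have : 1 ≤ v j := Nat.one_le_iff_ne_zero.2 h1
    omega

/-- Pigeonhole: if some set of columns is supported on fewer rows, det is 0. -/
lemma det_eq_zero_of_cols {ι R : Type*} [DecidableEq ι] [Fintype ι] [CommRing R]
    (M : Matrix ι ι R) (Q Rw : Finset ι) (hcard : Rw.card < Q.card)
    (h : ∀ q ∈ Q, ∀ p, p ∉ Rw → M p q = 0) : M.det = 0 := by
  rw [Matrix.det_apply']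
  apply Finset.sum_eq_zero
  intro σ _
  have : ∃ q ∈ Q, σ q ∉ Rw := by
    by_contra hc
    push_neg at hc
    have himg : Q.image σ ⊆ Rw := by
      intro x hx
      obtain ⟨q, hq, rfl⟩ := Finset.mem_image.1 hx
      exact hc q hq
    have := Finset.card_le_card himg
    rw [Finset.card_image_of_injective _ σ.injective] at this
    omega
  obtain ⟨q, hq, hnq⟩ := this
  have : ∏ i : ι, M (σ i) i = 0 := Finset.prod_eq_zero (Finset.mem_univ q) (h q hq (σ q) hnq)
  rw [this, mul_zero]

/-- For a polynomial of total degree ≤ 1, the coefficient of `X j` is the difference of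
evaluations at the indicator of `j` and at `0`. -/
lemma coeff_single_eq_eval_sub {σ F : Type*} [DecidableEq σ] [Field F]
    (p : MvPolynomial σ F) (hp : p.totalDegree ≤ 1) (j : σ) :
    coeff (Finsupp.single j 1) p =
      eval (fun i => if i = j then (1 : F) else 0) p - eval 0 p := by
  conv_rhs => rw [p.as_sum]
  rw [map_sum, map_sum, ← Finset.sum_sub_distrib]
  have key : ∀ v ∈ p.support,
      eval (fun i => if i = j then (1 : F) else 0) (monomial v (coeff v p)) -
        eval (0 : σ → F) (monomial v (coeff v p)) =
      if v = Finsupp.single j 1 then coeff v p else 0 := by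
    intro v hv
    rw [eval_monomial, eval_monomial]
    have hsum : (v.sum fun _ e => e) ≤ 1 := le_trans (MvPolynomial.le_totalDegree hv) hp
    rcases eq_or_ne v 0 with rfl | hv0
    · have : ¬ ((0 : σ →₀ ℕ) = Finsupp.single j 1) := by
        intro h
        have := congrArg (fun f => f j) h
        simp at this
      simp [this, Finsupp.prod_zero_index]
    · -- v ≠ 0 : the eval at 0 gives 0
      obtain ⟨i0, hi0⟩ : ∃ i, v i ≠ 0 := by
        by_contra hc; push_neg at hc; exact hv0 (Finsupp.ext fun i => hc i)
      have hz : (v.prod fun n e => (0 : σ → F) n ^ e) = 0 := by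
        apply Finset.prod_eq_zero (Finsupp.mem_support_iff.2 hi0)
        simp [zero_pow, hi0]
      rw [hz]
      by_cases hvs : v = Finsupp.single j 1
      · subst hvs
        rw [Finsupp.prod_single_index (by simp)]
        simp
      · -- v ≠ single j 1 : some i ≠ j with v i ≠ 0
        have : ∃ i, i ≠ j ∧ v i ≠ 0 := by
          by_contra hc
          push_neg at hc
          rcases eq_or_ne (v j) 0 with hj0 | hj0
          · refine hv0 (Finsupp.ext fun i => ?_)
            rcases eq_or_ne i j with rfl | hij
            · exact hj0
            · exact hc i hij
          · exact hvs (finsupp_eq_single_of_sum_le v j hj0 hsum)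
        obtain ⟨i, hij, hi⟩ := this
        have : (v.prod fun n e => (if n = j then (1:F) else 0) ^ e) = 0 := by
          apply Finset.prod_eq_zero (Finsupp.mem_support_iff.2 hi)
          simp [hij, zero_pow, hi]
        rw [this, if_neg hvs]
        ring
  rw [Finset.sum_congr rfl key, Finset.sum_ite_eq' p.support (Finsupp.single j 1) (coeff · p)]
  split
  · rfl
  · next h => exact MvPolynomial.notMem_support_iff.1 h

lemma matAmv_td {F : Type*} [Field F] (n : ℕ) (d : Fin n → F) (i j : Fin n) :
    (matAmv n d i j).totalDegree ≤ if (j : ℕ) = n - 1 then 1 else 0 := by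
  unfold matAmv
  simp only [Matrix.of_apply]
  split_ifs with h1 h2 h3 h4 <;>
    simp [totalDegree_C, totalDegree_X, totalDegree_one, totalDegree_zero]

lemma td_det_le {F : Type*} [Field F] (n : ℕ) (d : Fin n → F) (S : Finset (Fin n)) :
    (Matrix.det ((matAmv n d).submatrix
      (fun i : S => (i : Fin n)) (fun j : S => (j : Fin n)))).totalDegree ≤ 1 := by
  rw [Matrix.det_apply']
  refine le_trans (totalDegree_finset_sum _ _) ?_
  rw [Finset.sup_le_iff]
  intro σ _
  refine le_trans (totalDegree_mul _ _) ?_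
  have h1 : (((Equiv.Perm.sign σ : ℤ) : MvPolynomial (Fin (n-1)) F)).totalDegree = 0 := by
    have : ((Equiv.Perm.sign σ : ℤ) : MvPolynomial (Fin (n-1)) F) =
        C ((Equiv.Perm.sign σ : ℤ) : F) := (map_intCast (C : F →+* _) _).symm
    rw [this, totalDegree_C]
  rw [h1, zero_add]
  refine le_trans (totalDegree_finset_prod _ _) ?_
  refine le_trans (Finset.sum_le_sum fun q _ => matAmv_td n d _ _) ?_
  have : ∑ q : {x // x ∈ S}, (if ((q : Fin n) : ℕ) = n - 1 then 1 else 0) =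
      (Finset.univ.filter (fun q : {x // x ∈ S} => ((q : Fin n) : ℕ) = n - 1)).card := by
    rw [Finset.card_filter]
  rw [this]
  apply Finset.card_le_one.2
  intro a ha b hb
  simp only [Finset.mem_filter] at ha hb
  exact Subtype.ext (Fin.ext (ha.2.trans hb.2.symm))

/-- The evaluated matrix over `F`: diagonal `d`, subdiagonal 1. -/
def matF {F : Type*} [Field F] (n : ℕ) (d : Fin n → F) : Matrix (Fin n) (Fin n) F :=
  Matrix.of fun i j => if i = j then d i else if (i : ℕ) = (j : ℕ) + 1 then 1 else 0

lemma map0_matAmv {F : Type*} [Field F] (n : ℕ) (d : Fin n → F) :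
    (matAmv n d).map (eval (0 : Fin (n - 1) → F)) = matF n d := by
  ext p q
  simp only [Matrix.map_apply, matAmv, matF, Matrix.of_apply]
  split_ifs with h1 h2 h3 h4 <;> simp

lemma map_matAmv_offcol {F : Type*} [Field F] (n : ℕ) (d : Fin n → F)
    (f : Fin (n - 1) → F) (p q : Fin n) (hq : (q : ℕ) ≠ n - 1) :
    eval f (matAmv n d p q) = matF n d p q := by
  simp only [matAmv, matF, Matrix.of_apply]
  split_ifs with h1 h2 <;> simp

lemma map_matAmv_col {F : Type*} [Field F] (n : ℕ) (d : Fin n → F)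
    (j : Fin (n - 1)) (p q : Fin n) (hq : (q : ℕ) = n - 1) :
    eval (fun i => if i = j then (1 : F) else 0) (matAmv n d p q) =
      matF n d p q + (if (p : ℕ) = (j : ℕ) then 1 else 0) := by
  have hp := p.isLt
  have hj := j.isLt
  simp only [matAmv, matF, Matrix.of_apply]
  by_cases h1 : p = q
  · subst h1
    have hpj : ¬((p : ℕ) = (j : ℕ)) := by omega
    simp [hpj]
  · have h2 : ¬((p : ℕ) = (q : ℕ) + 1) := by omega
    rw [if_neg h1, if_neg h2, if_pos hq, if_neg h1, if_neg h2]
    by_cases h3 : (p : ℕ) < n - 1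
    · rw [dif_pos h3, eval_X]
      simp [Fin.ext_iff]
    · rw [dif_neg h3]
      have hpj : ¬((p : ℕ) = (j : ℕ)) := by omega
      simp [hpj]

lemma factA {F : Type*} [Field F] {n : ℕ} (d : Fin n → F) (S : Finset (Fin n))
    (a₀ c₀ : {y // y ∈ S}) (x : Fin n) (hx : x ∉ S)
    (hax : ((a₀ : Fin n) : ℕ) < (x : ℕ)) (hxc : (x : ℕ) < n - 1)
    (hc₀ : ((c₀ : Fin n) : ℕ) = n - 1) :
    Matrix.det (Matrix.updateCol
      ((matF n d).submatrix (fun i : S => (i : Fin n)) (fun i : S => (i : Fin n)))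
      c₀ (Pi.single a₀ 1)) = 0 := by
  classical
  set Rw := Finset.univ.filter (fun p : {y // y ∈ S} => ((p : Fin n) : ℕ) < (x : ℕ)) with hRw
  have hc₀R : c₀ ∉ Rw := by simp [hRw]; omega
  refine det_eq_zero_of_cols _ (insert c₀ Rw) Rw ?_ ?_
  · rw [Finset.card_insert_of_notMem hc₀R]; omega
  · intro q hq p hp
    have hpx : (x : ℕ) < ((p : Fin n) : ℕ) := by
      simp only [hRw, Finset.mem_filter, Finset.mem_univ, true_and, not_lt] at hp
      rcases lt_or_eq_of_le hp with h | h
      · exact h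
      · exfalso; apply hx
        have hpe : (p : Fin n) = x := Fin.ext h.symm
        rw [← hpe]; exact p.2
    rcases Finset.mem_insert.1 hq with rfl | hqR
    · rw [Matrix.updateCol_self]
      have : p ≠ a₀ := by
        intro h; subst h; omega
      simp [Pi.single_apply, this]
    · have hqc : q ≠ c₀ := fun h => hc₀R (h ▸ hqR)
      rw [Matrix.updateCol_ne hqc]
      have hqx : ((q : Fin n) : ℕ) < (x : ℕ) := by
        simp only [hRw, Finset.mem_filter, Finset.mem_univ, true_and] at hqR
        exact hqR
      simp only [Matrix.submatrix_apply, matF, Matrix.of_apply]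
      have h1 : (p : Fin n) ≠ (q : Fin n) := by
        intro h
        have := congrArg (fun y : Fin n => (y : ℕ)) h
        omega
      have h2 : ¬ (((p : Fin n) : ℕ) = ((q : Fin n) : ℕ) + 1) := by omega
      simp [h1, h2]

lemma factB {F : Type*} [Field F] {n : ℕ} (d : Fin n → F) (j : ℕ) (hj : j < n - 1)
    (S₀ : Finset (Fin n)) (hS₀ : ∀ x : Fin n, x ∈ S₀ ↔ j ≤ (x : ℕ))
    (a₀ c₀ : {y // y ∈ S₀}) (ha₀ : ((a₀ : Fin n) : ℕ) = j)
    (hc₀ : ((c₀ : Fin n) : ℕ) = n - 1) :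
    Matrix.det (Matrix.updateCol
      ((matF n d).submatrix (fun i : S₀ => (i : Fin n)) (fun i : S₀ => (i : Fin n)))
      c₀ (Pi.single a₀ 1)) = (-1) ^ (n - 1 - j) := by
  classical
  have hn : 2 ≤ n := by omega
  set m' := n - 1 - j with hm'
  have hcard : S₀.card = m' + 1 := by
    have hIcc : S₀ = Finset.Icc ⟨j, by omega⟩ ⟨n - 1, by omega⟩ := by
      ext x
      rw [hS₀, Finset.mem_Icc]
      have := x.isLt
      constructor
      · intro h
        exact ⟨h, by rw [Fin.le_def]; simp; omega⟩
      · intro h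
        exact h.1
    rw [hIcc, Fin.card_Icc]
    simp only [Fin.val_mk]
    omega
  set U := Matrix.updateCol
      ((matF n d).submatrix (fun i : S₀ => (i : Fin n)) (fun i : S₀ => (i : Fin n)))
      c₀ (Pi.single a₀ 1) with hU
  set e := S₀.orderIsoOfFin hcard with he
  have hdet : U.det = (U.submatrix e.toEquiv e.toEquiv).det :=
    (Matrix.det_submatrix_equiv_self e.toEquiv U).symm
  have hemb : ∀ p : Fin (m' + 1), (((e p) : {y // y ∈ S₀}) : Fin n) = ⟨j + p, by omega⟩ := by
    have hmono : StrictMono (fun p : Fin (m' + 1) => (⟨j + p, by omega⟩ : Fin n)) := by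
      intro a b hab
      simp only [Fin.mk_lt_mk]
      exact Nat.add_lt_add_left hab j
    have hmem : ∀ p : Fin (m' + 1), (⟨j + p, by omega⟩ : Fin n) ∈ S₀ := by
      intro p
      rw [hS₀]
      simp
    have huniq := Finset.orderEmbOfFin_unique hcard hmem hmono
    intro p
    have h2 : ((e p : {y // y ∈ S₀}) : Fin n) = S₀.orderEmbOfFin hcard p :=
      Finset.coe_orderIsoOfFin_apply S₀ hcard p
    rw [h2, ← huniq]
  set B := U.submatrix e.toEquiv e.toEquiv with hB
  -- the last column of B
  have hce : e (Fin.last m') = c₀ := by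
    apply Subtype.ext
    apply Fin.ext
    rw [hemb]
    simp only [Fin.val_mk, Fin.val_last, hc₀]
    omega
  have hea : ∀ p : Fin (m' + 1), e p = a₀ ↔ p = 0 := by
    intro p
    constructor
    · intro h
      have h2 : ((e p : {y // y ∈ S₀}) : Fin n) = (a₀ : Fin n) := by rw [h]
      rw [hemb p] at h2
      have h3 : j + (p : ℕ) = j := by
        have h4 := congrArg Fin.val h2
        simpa [ha₀] using h4
      exact Fin.ext (by simp only [Fin.val_zero]; omega)
    · rintro rfl
      apply Subtype.ext
      apply Fin.ext
      rw [hemb 0]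
      simp [ha₀]
  have hBL : ∀ p : Fin (m' + 1), B p (Fin.last m') = if p = 0 then 1 else 0 := by
    intro p
    show U (e p) (e (Fin.last m')) = _
    rw [hce, hU, Matrix.updateCol_self, Pi.single_apply]
    simp only [hea p]
  -- off-column entries of B
  have hBoff : ∀ (p q : Fin (m' + 1)), q ≠ Fin.last m' →
      B p q = if (p : ℕ) = (q : ℕ) then d ⟨j + p, by omega⟩
        else if (p : ℕ) = (q : ℕ) + 1 then 1 else 0 := by
    intro p q hq
    have heq : e q ≠ c₀ := by
      rw [← hce]
      exact fun h => hq (e.injective (Subtype.ext (Subtype.ext_iff.1 h)))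
    show U (e p) (e q) = _
    rw [hU, Matrix.updateCol_ne heq]
    simp only [Matrix.submatrix_apply, matF, Matrix.of_apply, hemb]
    have h1 : ((⟨j + p, by omega⟩ : Fin n) = ⟨j + q, by omega⟩) ↔ (p : ℕ) = (q : ℕ) := by
      rw [Fin.ext_iff]; simp only [Fin.val_mk]; omega
    by_cases h : (p : ℕ) = (q : ℕ)
    · rw [if_pos (h1.2 h), if_pos h]
    · rw [if_neg (fun hh => h (h1.1 hh)), if_neg h]
      by_cases h3 : (p : ℕ) = (q : ℕ) + 1
      · rw [if_pos (by omega), if_pos h3]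
      · rw [if_neg (by omega), if_neg h3]
  -- Laplace expansion along the last column
  rw [hdet]
  show B.det = _
  rw [Matrix.det_succ_column B (Fin.last m')]
  rw [Finset.sum_eq_single (0 : Fin (m' + 1))]
  · rw [hBL 0, if_pos rfl]
    have hminor : (B.submatrix (Fin.succAbove 0) (Fin.succAbove (Fin.last m'))).det = 1 := by
      have htri : (B.submatrix (Fin.succAbove 0) (Fin.succAbove (Fin.last m'))).BlockTriangular id := by
        intro p q hpq
        simp only [Matrix.submatrix_apply, Fin.succAbove_zero, Fin.succAbove_last] at hpq ⊢
        rw [hBoff _ _ (Fin.castSucc_lt_last q).ne]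
        simp only [Fin.val_succ, Fin.coe_castSucc]
        have : ¬((p : ℕ) + 1 = (q : ℕ)) := by simp at hpq; omega
        have h2 : ¬((p : ℕ) + 1 = (q : ℕ) + 1) := by simp at hpq; omega
        rw [if_neg this, if_neg h2]
      rw [Matrix.det_of_upperTriangular htri]
      apply Finset.prod_eq_one
      intro p _
      simp only [Matrix.submatrix_apply, Fin.succAbove_zero, Fin.succAbove_last]
      rw [hBoff _ _ (Fin.castSucc_lt_last p).ne]
      simp
    rw [hminor]
    simp
  · intro i _ hi
    rw [hBL i, if_neg hi]
    ring
  · intro h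
    exact absurd (Finset.mem_univ _) h

lemma fieldSum {F : Type*} [Field F] (n : ℕ) (d : Fin n → F) (k j : Fin (n - 1))
    (hjk : (j : ℕ) ≤ (k : ℕ)) :
    ∑ S ∈ Finset.univ.powerset.filter (fun S : Finset (Fin n) => S.card = n - (k : ℕ)),
      (Matrix.det (((matAmv n d).map (eval (fun i => if i = j then (1 : F) else 0))).submatrix
          (fun i : S => (i : Fin n)) (fun i : S => (i : Fin n))) -
        Matrix.det (((matAmv n d).map (eval (0 : Fin (n - 1) → F))).submatrix
          (fun i : S => (i : Fin n)) (fun i : S => (i : Fin n)))) =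
      if j = k then (-1) ^ (n - 1 - (k : ℕ)) else 0 := by
  classical
  have hk := k.isLt
  have hj := j.isLt
  have hn : 2 ≤ n := by omega
  set jF : Fin n := ⟨(j : ℕ), by omega⟩ with hjF
  set lastF : Fin n := ⟨n - 1, by omega⟩ with hlastF
  set Icc := Finset.Icc jF lastF with hIcc
  have hjIcc : jF ∈ Icc := by
    rw [hIcc, Finset.mem_Icc]
    exact ⟨le_refl _, by rw [Fin.le_def]; simp only [hjF, hlastF, Fin.val_mk]; omega⟩
  have hlIcc : lastF ∈ Icc := by
    rw [hIcc, Finset.mem_Icc]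
    exact ⟨by rw [Fin.le_def]; simp only [hjF, hlastF, Fin.val_mk]; omega, le_refl _⟩
  have hcardIcc : Icc.card = n - (j : ℕ) := by
    rw [hIcc, Fin.card_Icc]
    simp only [hjF, hlastF, Fin.val_mk]
    omega
  have key : ∀ S ∈ Finset.univ.powerset.filter
      (fun S : Finset (Fin n) => S.card = n - (k : ℕ)),
      (Matrix.det (((matAmv n d).map (eval (fun i => if i = j then (1 : F) else 0))).submatrix
          (fun i : S => (i : Fin n)) (fun i : S => (i : Fin n))) -
        Matrix.det (((matAmv n d).map (eval (0 : Fin (n - 1) → F))).submatrix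
          (fun i : S => (i : Fin n)) (fun i : S => (i : Fin n)))) =
      if j = k ∧ S = Icc then (-1) ^ (n - 1 - (k : ℕ)) else 0 := by
    intro S hS
    have hcardS : S.card = n - (k : ℕ) := (Finset.mem_filter.1 hS).2
    rw [map0_matAmv, Matrix.submatrix_map]
    by_cases hl : lastF ∈ S
    · by_cases hjS : jF ∈ S
      · -- both in S
        set a₀ : {y // y ∈ S} := ⟨jF, hjS⟩ with ha₀
        set c₀ : {y // y ∈ S} := ⟨lastF, hl⟩ with hc₀
        set Msub := (matF n d).submatrix (fun i : S => (i : Fin n)) (fun i : S => (i : Fin n))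
          with hMsub
        have hsplit : ((matAmv n d).submatrix (fun i : S => (i : Fin n))
            (fun i : S => (i : Fin n))).map (eval (fun i => if i = j then (1 : F) else 0)) =
            Matrix.updateCol Msub c₀ (fun p => Msub p c₀ + (Pi.single a₀ 1 : {y // y ∈ S} → F) p) := by
          ext p q
          by_cases hq : q = c₀
          · subst hq
            rw [Matrix.updateCol_self]
            simp only [Matrix.map_apply, Matrix.submatrix_apply, hMsub]
            rw [map_matAmv_col n d j _ _ (by simp [hc₀, hlastF])]
            congr 1
            rw [Pi.single_apply]
            have : (p = a₀) ↔ (((p : Fin n) : ℕ) = (j : ℕ)) := by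
              constructor
              · rintro rfl; simp [ha₀, hjF]
              · intro h
                apply Subtype.ext; apply Fin.ext
                simp [h, ha₀, hjF]
            simp only [this]
          · rw [Matrix.updateCol_ne hq]
            simp only [Matrix.map_apply, Matrix.submatrix_apply, hMsub]
            apply map_matAmv_offcol
            intro hval
            apply hq
            apply Subtype.ext; apply Fin.ext
            simp [hval, hc₀, hlastF]
        rw [hsplit]
        rw [show (fun p => Msub p c₀ + (Pi.single a₀ 1 : {y // y ∈ S} → F) p) =
          ((fun p => Msub p c₀) + Pi.single a₀ 1) from rfl]
        rw [Matrix.det_updateCol_add]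
        rw [show Matrix.updateCol Msub c₀ (fun p => Msub p c₀) = Msub from
          Matrix.updateCol_eq_self Msub c₀]
        rw [add_sub_cancel_left]
        by_cases hsub : Icc ⊆ S
        · have hjk' : (j : ℕ) = (k : ℕ) := by
            have h1 := Finset.card_le_card hsub
            rw [hcardIcc, hcardS] at h1
            omega
          have hSIcc : S = Icc := by
            refine (Finset.eq_of_subset_of_card_le hsub ?_).symm
            rw [hcardIcc, hcardS]
            omega
          have hjkF : j = k := Fin.ext hjk'
          rw [if_pos ⟨hjkF, hSIcc⟩]
          have := factB d (j : ℕ) (by omega) S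
            (fun x => by
              subst hSIcc
              rw [hIcc, Finset.mem_Icc]
              constructor
              · intro h
                have := h.1
                rwa [Fin.le_def] at this
              · intro h
                refine ⟨by rwa [Fin.le_def], by rw [Fin.le_def]; simp [hlastF]; omega⟩)
            a₀ c₀ (by simp [ha₀, hjF]) (by simp [hc₀, hlastF])
          rw [this, hjk']
        · obtain ⟨x, hxIcc, hxS⟩ := Finset.not_subset.1 hsub
          have hxj : jF < x := by
            rcases lt_or_eq_of_le (Finset.mem_Icc.1 hxIcc).1 with h | h
            · exact h
            · exact absurd (h ▸ hjS) hxS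
          have hxl : (x : ℕ) < n - 1 := by
            have h2 := (Finset.mem_Icc.1 hxIcc).2
            rw [Fin.le_def] at h2
            simp only [hlastF, Fin.val_mk] at h2
            rcases lt_or_eq_of_le h2 with h | h
            · exact h
            · exact absurd ((Fin.ext h : x = lastF) ▸ hl) hxS
          rw [factA d S a₀ c₀ x hxS (by rw [Fin.lt_def] at hxj; simpa [ha₀, hjF] using hxj)
            hxl (by simp [hc₀, hlastF])]
          rw [if_neg]
          rintro ⟨-, rfl⟩
          exact hsub (le_refl _)
      · -- jF ∉ S : the two matrices agree
        have : ((matAmv n d).submatrix (fun i : S => (i : Fin n))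
            (fun i : S => (i : Fin n))).map (eval (fun i => if i = j then (1 : F) else 0)) =
            (matF n d).submatrix (fun i : S => (i : Fin n)) (fun i : S => (i : Fin n)) := by
          ext p q
          simp only [Matrix.map_apply, Matrix.submatrix_apply]
          by_cases hq : ((q : Fin n) : ℕ) = n - 1
          · rw [map_matAmv_col n d j _ _ hq]
            have : ¬(((p : Fin n) : ℕ) = (j : ℕ)) := by
              intro h
              apply hjS
              have : (p : Fin n) = jF := Fin.ext (by simpa [hjF] using h)
              exact this ▸ p.2
            simp [this]
          · exact map_matAmv_offcol n d _ _ _ hq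
        rw [this, sub_self, if_neg]
        rintro ⟨-, rfl⟩
        exact hjS hjIcc
    · -- lastF ∉ S : the two matrices agree
      have : ((matAmv n d).submatrix (fun i : S => (i : Fin n))
          (fun i : S => (i : Fin n))).map (eval (fun i => if i = j then (1 : F) else 0)) =
          (matF n d).submatrix (fun i : S => (i : Fin n)) (fun i : S => (i : Fin n)) := by
        ext p q
        simp only [Matrix.map_apply, Matrix.submatrix_apply]
        apply map_matAmv_offcol
        intro hval
        apply hl
        have : (q : Fin n) = lastF := Fin.ext (by simpa [hlastF] using hval)
        exact this ▸ q.2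
      rw [this, sub_self, if_neg]
      rintro ⟨-, rfl⟩
      exact hl hlIcc
  rw [Finset.sum_congr rfl key]
  by_cases hjk' : j = k
  · subst hjk'
    have hmem : Icc ∈ Finset.univ.powerset.filter
        (fun S : Finset (Fin n) => S.card = n - (j : ℕ)) :=
      Finset.mem_filter.2 ⟨Finset.mem_powerset.2 (Finset.subset_univ _), by rw [hcardIcc]⟩
    rw [if_pos rfl]
    have hsimp : ∀ S : Finset (Fin n),
        (if j = j ∧ S = Icc then ((-1 : F)) ^ (n - 1 - (j : ℕ)) else 0) =
        (if S = Icc then ((-1 : F)) ^ (n - 1 - (j : ℕ)) else 0) := by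
      intro S; simp
    rw [Finset.sum_congr rfl (fun S _ => hsimp S)]
    rw [Finset.sum_ite_eq' _ Icc (fun _ => ((-1 : F)) ^ (n - 1 - (j : ℕ))), if_pos hmem]
  · rw [if_neg hjk']
    apply Finset.sum_eq_zero
    intro S _
    rw [if_neg (fun h => hjk' h.1)]


/-- The sum of all principal minors of size `n - k` (for `k` zero-indexed,
this is size `n - (k+1) + 1` in one-indexed notation) is
`(-1)^(n-k-1) * b_k` plus a polynomial in `b_{k+1}, …, b_{n-1}` only. -/
theorem stmt3 {F : Type*} [Field F] (n : ℕ) (hn : 1 ≤ n) (d : Fin n → F)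
    (k : Fin (n - 1)) :
    ∃ g : MvPolynomial (Fin (n - 1)) F,
      (∀ j : Fin (n - 1), (j : ℕ) ≤ (k : ℕ) → j ∉ g.vars) ∧
      ∑ S ∈ Finset.univ.powerset.filter (fun S : Finset (Fin n) => S.card = n - (k : ℕ)),
          Matrix.det ((matAmv n d).submatrix
            (fun i : S => (i : Fin n)) (fun j : S => (j : Fin n)))
        = (-1) ^ (n - 1 - (k : ℕ)) * X k + g := by
  classical
  have hk := k.isLt
  have hn2 : 2 ≤ n := by omega
  set e := n - 1 - (k : ℕ) with he
  set P := ∑ S ∈ Finset.univ.powerset.filter (fun S : Finset (Fin n) => S.card = n - (k : ℕ)),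
      Matrix.det ((matAmv n d).submatrix
        (fun i : S => (i : Fin n)) (fun j : S => (j : Fin n))) with hP
  refine ⟨P - (-1) ^ e * X k, ?_, by ring⟩
  have hPtd : P.totalDegree ≤ 1 :=
    le_trans (totalDegree_finset_sum _ _) (Finset.sup_le fun S _ => td_det_le n d S)
  have h1C : ((-1 : MvPolynomial (Fin (n - 1)) F) ^ e) = C ((-1 : F) ^ e) := by
    rw [map_pow, map_neg, map_one]
  have hXtd : ((-1 : MvPolynomial (Fin (n - 1)) F) ^ e * X k).totalDegree ≤ 1 := by
    refine le_trans (totalDegree_mul _ _) ?_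
    rw [h1C, totalDegree_C, totalDegree_X, zero_add]
  have hgtd : (P - (-1) ^ e * X k).totalDegree ≤ 1 := by
    rw [sub_eq_add_neg]
    refine le_trans (totalDegree_add _ _) ?_
    rw [totalDegree_neg]
    exact max_le hPtd hXtd
  have hcoeff : ∀ j : Fin (n - 1), (j : ℕ) ≤ (k : ℕ) →
      coeff (Finsupp.single j 1) P = if j = k then ((-1 : F)) ^ e else 0 := by
    intro j hj
    rw [coeff_single_eq_eval_sub P hPtd j]
    have he1 : eval (fun i => if i = j then (1 : F) else 0) P =
        ∑ S ∈ Finset.univ.powerset.filter (fun S : Finset (Fin n) => S.card = n - (k : ℕ)),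
          Matrix.det (((matAmv n d).map
            (eval (fun i => if i = j then (1 : F) else 0))).submatrix
            (fun i : S => (i : Fin n)) (fun i : S => (i : Fin n))) := by
      rw [hP, map_sum]
      refine Finset.sum_congr rfl fun S _ => ?_
      rw [RingHom.map_det, RingHom.mapMatrix_apply, Matrix.submatrix_map]
    have he0 : eval (0 : Fin (n - 1) → F) P =
        ∑ S ∈ Finset.univ.powerset.filter (fun S : Finset (Fin n) => S.card = n - (k : ℕ)),
          Matrix.det (((matAmv n d).map (eval (0 : Fin (n - 1) → F))).submatrix
            (fun i : S => (i : Fin n)) (fun i : S => (i : Fin n))) := by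
      rw [hP, map_sum]
      refine Finset.sum_congr rfl fun S _ => ?_
      rw [RingHom.map_det, RingHom.mapMatrix_apply, Matrix.submatrix_map]
    rw [he1, he0, ← Finset.sum_sub_distrib, fieldSum n d k j hj]
  intro j hj hmem
  obtain ⟨v, hv, hvj⟩ := (mem_vars j).1 hmem
  have hvsum : (v.sum fun _ e => e) ≤ 1 := le_trans (le_totalDegree hv) hgtd
  have hveq : v = Finsupp.single j 1 :=
    finsupp_eq_single_of_sum_le v j (Finsupp.mem_support_iff.1 hvj) hvsum
  rw [hveq] at hv
  apply MvPolynomial.mem_support_iff.1 hv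
  rw [coeff_sub, hcoeff j hj, h1C, coeff_C_mul]
  have hX : coeff (Finsupp.single j 1) (X k : MvPolynomial (Fin (n - 1)) F) =
      if j = k then 1 else 0 := by
    rw [coeff_X']
    congr 1
    simp only [eq_iff_iff]
    constructor
    · intro h
      exact (Finsupp.single_left_inj one_ne_zero).1 h |>.symm
    · rintro rfl
      rfl
  rw [hX]
  by_cases h : j = k <;> simp [h]
end

section
/- (Mirsky's theorem) Let λ_1,...,λ_n and d_1,...,d_n be complex numbers with λ_1 + ... + λ_n = d_1 + ... + d_n. Then there exists an n×n complex matrix A with diagonal entries A_{ii} = d_i for all i and with characteristic polynomial ∏_{i=1}^n (t - λ_i). -/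
open Polynomial Finset

lemma detN {R : Type*} [CommRing R] :
    ∀ (n : ℕ) (f g : ℕ → R), (∀ j, n ≤ j + 1 → g j = 0) →
    (Matrix.of (fun i j : Fin n =>
      if (i : ℕ) = (j : ℕ) then f i else if (i : ℕ) + 1 = n then g j
      else if (j : ℕ) = (i : ℕ) + 1 then -1 else 0)).det
    = ∏ i ∈ Finset.range n, f i + ∑ j ∈ Finset.range n, g j * ∏ i ∈ Finset.range j, f i := by
  intro n
  induction n with
  | zero => intro f g hg; simp [Matrix.det_isEmpty]
  | succ n ih =>
    intro f g hg
    rw [Matrix.det_succ_column_zero, Fin.sum_univ_succ]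
    have h0 : (Matrix.of (fun i j : Fin (n+1) =>
        if (i : ℕ) = (j : ℕ) then f i else if (i : ℕ) + 1 = n + 1 then g j
        else if (j : ℕ) = (i : ℕ) + 1 then -1 else 0)).submatrix (Fin.succAbove 0) Fin.succ
        = Matrix.of (fun i j : Fin n =>
        if (i : ℕ) = (j : ℕ) then f ((i : ℕ)+1)
        else if (i : ℕ) + 1 = n then g ((j : ℕ)+1)
        else if (j : ℕ) = (i : ℕ) + 1 then -1 else 0) := by
      funext i j
      simp only [Matrix.submatrix_apply, Matrix.of_apply, Fin.succAbove_zero, Fin.val_succ]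
      have e1 : ((i:ℕ)+1 = (j:ℕ)+1) = ((i:ℕ) = (j:ℕ)) := by simp
      have e2 : ((i:ℕ)+1+1 = n+1) = ((i:ℕ)+1 = n) := by simp
      have e3 : ((j:ℕ)+1 = (i:ℕ)+1+1) = ((j:ℕ) = (i:ℕ)+1) := by simp
      simp only [e1, e2, e3]
    have hdet : ((Matrix.of (fun i j : Fin (n+1) =>
        if (i : ℕ) = (j : ℕ) then f i else if (i : ℕ) + 1 = n + 1 then g j
        else if (j : ℕ) = (i : ℕ) + 1 then -1 else 0)).submatrix
        (Fin.succAbove 0) Fin.succ).det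
        = ∏ i ∈ Finset.range n, f (i+1) + ∑ j ∈ Finset.range n, g (j+1) * ∏ i ∈ Finset.range j, f (i+1) := by
      rw [h0]
      exact ih (fun k => f (k+1)) (fun k => g (k+1)) (fun j hj => hg (j+1) (by omega))
    rw [hdet]
    have hT : (∑ i : Fin n, (-1) ^ ((i.succ : Fin (n+1)) : ℕ) *
        (Matrix.of (fun i j : Fin (n+1) =>
          if (i : ℕ) = (j : ℕ) then f i else if (i : ℕ) + 1 = n + 1 then g j
          else if (j : ℕ) = (i : ℕ) + 1 then -1 else 0)) i.succ 0 *
        ((Matrix.of (fun i j : Fin (n+1) =>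
          if (i : ℕ) = (j : ℕ) then f i else if (i : ℕ) + 1 = n + 1 then g j
          else if (j : ℕ) = (i : ℕ) + 1 then -1 else 0)).submatrix
          (Fin.succAbove i.succ) Fin.succ).det) = g 0 := by
      rcases n with _ | m
      · simpa using (hg 0 (by omega)).symm
      rw [Fin.sum_univ_castSucc]
      have hzero : ∀ i : Fin m, (Matrix.of (fun i j : Fin (m+2) =>
          if (i : ℕ) = (j : ℕ) then f i else if (i : ℕ) + 1 = m + 2 then g j
          else if (j : ℕ) = (i : ℕ) + 1 then -1 else 0)) i.castSucc.succ 0 = 0 := by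
        intro i
        have hi : (i : ℕ) < m := i.isLt
        simp only [Matrix.of_apply, Fin.val_succ, Fin.coe_castSucc, Fin.val_zero]
        split_ifs <;> simp_all <;> omega
      rw [Finset.sum_eq_zero (fun i _ => by rw [hzero i]; ring)]
      -- last term
      have hrow : (Matrix.of (fun i j : Fin (m+2) =>
          if (i : ℕ) = (j : ℕ) then f i else if (i : ℕ) + 1 = m + 2 then g j
          else if (j : ℕ) = (i : ℕ) + 1 then -1 else 0)) (Fin.last m).succ 0 = g 0 := by
        simp only [Matrix.of_apply, Fin.val_succ, Fin.val_last, Fin.val_zero]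
        rw [if_neg (by omega)]
        simp
      have hlt : ((Matrix.of (fun i j : Fin (m+2) =>
          if (i : ℕ) = (j : ℕ) then f i else if (i : ℕ) + 1 = m + 2 then g j
          else if (j : ℕ) = (i : ℕ) + 1 then -1 else 0)).submatrix
          (Fin.succAbove (Fin.last m).succ) Fin.succ).det = (-1) ^ (m+1) := by
        have hsub : ((Matrix.of (fun i j : Fin (m+2) =>
            if (i : ℕ) = (j : ℕ) then f i else if (i : ℕ) + 1 = m + 2 then g j
            else if (j : ℕ) = (i : ℕ) + 1 then -1 else 0)).submatrix
            (Fin.succAbove (Fin.last m).succ) Fin.succ).BlockTriangular OrderDual.toDual := by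
          intro a b hab
          have hab' : (a : ℕ) < (b : ℕ) := hab
          simp only [Matrix.submatrix_apply, Matrix.of_apply]
          have hsa : ((Fin.succAbove (Fin.last m).succ a : Fin (m+2)) : ℕ) = (a : ℕ) := by
            rw [show (Fin.last m).succ = Fin.last (m+1) from rfl, Fin.succAbove_last,
              Fin.coe_castSucc]
          rw [hsa, Fin.val_succ, if_neg (by omega), if_neg (by omega), if_neg (by omega)]
        rw [Matrix.det_of_lowerTriangular _ hsub]
        have hdiag : ∀ a : Fin (m+1), ((Matrix.of (fun i j : Fin (m+2) =>
            if (i : ℕ) = (j : ℕ) then f i else if (i : ℕ) + 1 = m + 2 then g j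
            else if (j : ℕ) = (i : ℕ) + 1 then -1 else 0)).submatrix
            (Fin.succAbove (Fin.last m).succ) Fin.succ) a a = -1 := by
          intro a
          simp only [Matrix.submatrix_apply, Matrix.of_apply]
          have hsa : ((Fin.succAbove (Fin.last m).succ a : Fin (m+2)) : ℕ) = (a : ℕ) := by
            rw [show (Fin.last m).succ = Fin.last (m+1) from rfl, Fin.succAbove_last,
              Fin.coe_castSucc]
          rw [hsa, Fin.val_succ, if_neg (by omega), if_neg (by omega), if_pos rfl]
        rw [Finset.prod_congr rfl (fun a _ => hdiag a), Finset.prod_const]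
        simp
      rw [hrow, hlt]
      have hv : ((Fin.last m).succ : ℕ) = m + 1 := by simp
      rw [hv, mul_right_comm, ← pow_add, Even.neg_one_pow ⟨m+1, rfl⟩, one_mul, zero_add]
    rw [hT]
    have hM00 : (Matrix.of (fun i j : Fin (n+1) =>
        if (i : ℕ) = (j : ℕ) then f i else if (i : ℕ) + 1 = n + 1 then g j
        else if (j : ℕ) = (i : ℕ) + 1 then -1 else 0)) 0 0 = f 0 := by
      simp
    rw [hM00]
    rw [Finset.prod_range_succ', Finset.sum_range_succ']
    have hprod : ∀ j, ∏ i ∈ Finset.range (j+1), f i = f 0 * ∏ i ∈ Finset.range j, f (i+1) := by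
      intro j; rw [Finset.prod_range_succ']; ring
    simp only [hprod, Fin.val_zero, pow_zero, Finset.prod_range_zero, mul_one]
    have hs : ∑ x ∈ Finset.range n, f 0 * (g (x+1) * ∏ i ∈ Finset.range x, f (i+1))
        = ∑ x ∈ Finset.range n, g (x+1) * (f 0 * ∏ i ∈ Finset.range x, f (i+1)) :=
      Finset.sum_congr rfl fun x _ => by ring
    rw [one_mul, mul_add, Finset.mul_sum, hs]
    ring

lemma repN (d : ℕ → ℂ) : ∀ (m : ℕ) (q : ℂ[X]), q.degree < (m : ℕ) →
    ∃ c : ℕ → ℂ, q = ∑ j ∈ Finset.range m, C (c j) * ∏ i ∈ Finset.range j, (X - C (d i)) := by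
  intro m
  induction m with
  | zero =>
    intro q hq
    refine ⟨0, ?_⟩
    have : q = 0 := by
      ext k
      simpa using (q.degree_lt_iff_coeff_zero 0).mp hq k (Nat.zero_le k)
    simp [this]
  | succ m ih =>
    intro q hq
    set p : ℂ[X] := ∏ i ∈ Finset.range m, (X - C (d i)) with hp
    have hpm : p.Monic := monic_prod_of_monic _ _ fun i _ => monic_X_sub_C _
    have hpd : p.natDegree = m := by
      rw [hp, natDegree_prod _ _ (fun i _ => X_sub_C_ne_zero _)]
      simp
    have hq' : (q - C (q.coeff m) * p).degree < (m : ℕ) := by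
      rw [Polynomial.degree_lt_iff_coeff_zero]
      intro k hk
      rw [coeff_sub, coeff_C_mul]
      rcases eq_or_lt_of_le hk with hk' | hk'
      · rw [← hk', ← hpd, hpm.coeff_natDegree, hpd, mul_one, sub_self]
      · have h1 : q.coeff k = 0 := by
          apply coeff_eq_zero_of_degree_lt
          exact lt_of_lt_of_le hq (by exact_mod_cast Nat.cast_le.mpr hk')
        have h2 : p.coeff k = 0 := by
          apply coeff_eq_zero_of_natDegree_lt; omega
        rw [h1, h2, mul_zero, sub_self]
    obtain ⟨c, hc⟩ := ih _ hq'
    refine ⟨Function.update c m (q.coeff m), ?_⟩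
    rw [Finset.sum_range_succ]
    have hterm : ∀ j ∈ Finset.range m,
        C (Function.update c m (q.coeff m) j) * ∏ i ∈ Finset.range j, (X - C (d i))
        = C (c j) * ∏ i ∈ Finset.range j, (X - C (d i)) := by
      intro j hj
      rw [Function.update_of_ne (by simp at hj; omega) _ _]
    rw [Finset.sum_congr rfl hterm, ← hc, Function.update_self]
    ring

theorem stmt8 (n : ℕ) (l d : Fin n → ℂ) (h : ∑ i, l i = ∑ i, d i) :
    ∃ A : Matrix (Fin n) (Fin n) ℂ,
      (∀ i, A i i = d i) ∧ A.charpoly = ∏ i, (X - C (l i)) := by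
  rcases n with _ | m
  · refine ⟨0, fun i => i.elim0, ?_⟩
    simp [Matrix.charpoly]
  have hd'ex : ∃ d' : ℕ → ℂ, ∀ i : Fin (m+1), d' (i : ℕ) = d i :=
    ⟨fun k => if h : k < m + 1 then d ⟨k, h⟩ else 0, fun i => by simp [i.isLt]⟩
  obtain ⟨d', hd'val⟩ := hd'ex
  set pl : ℂ[X] := ∏ i, (X - C (l i)) with hpl
  set pd : ℂ[X] := ∏ i, (X - C (d i)) with hpd
  have hml : pl.Monic := monic_prod_of_monic _ _ fun i _ => monic_X_sub_C _
  have hmd : pd.Monic := monic_prod_of_monic _ _ fun i _ => monic_X_sub_C _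
  have hdl : pl.natDegree = m + 1 := by
    rw [hpl, natDegree_prod _ _ (fun i _ => X_sub_C_ne_zero _)]; simp
  have hdd : pd.natDegree = m + 1 := by
    rw [hpd, natDegree_prod _ _ (fun i _ => X_sub_C_ne_zero _)]; simp
  have hq : (pl - pd).degree < (m : ℕ) := by
    rw [Polynomial.degree_lt_iff_coeff_zero]
    intro k hk
    rw [coeff_sub]
    rcases eq_or_lt_of_le hk with hk' | hk'
    · have h1 : pl.nextCoeff = pl.coeff m := by
        rw [nextCoeff_of_natDegree_pos (by omega), hdl]
        norm_num
      have h2 : pd.nextCoeff = pd.coeff m := by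
        rw [nextCoeff_of_natDegree_pos (by omega), hdd]
        norm_num
      have h3 : pl.nextCoeff = pd.nextCoeff := by
        rw [hpl, hpd, prod_X_sub_C_nextCoeff, prod_X_sub_C_nextCoeff, h]
      rw [← hk', ← h1, ← h2, h3, sub_self]
    · rcases eq_or_lt_of_le (Nat.succ_le_of_lt hk') with hk'' | hk''
      · rw [← hk'']
        show pl.coeff (m + 1) - pd.coeff (m + 1) = 0
        rw [← hdl, hml.coeff_natDegree, hdl, ← hdd, hmd.coeff_natDegree, sub_self]
      · rw [coeff_eq_zero_of_natDegree_lt (by omega), coeff_eq_zero_of_natDegree_lt (by omega),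
          sub_self]
  obtain ⟨c, hc⟩ := repN d' m _ hq
  obtain ⟨cc, hclt, hcge⟩ : ∃ cc : ℕ → ℂ, (∀ j, j < m → cc j = c j) ∧ (∀ j, m ≤ j → cc j = 0) :=
    ⟨fun j => if j < m then c j else 0, fun j hj => if_pos hj, fun j hj => if_neg (by omega)⟩
  refine ⟨Matrix.of (fun i j : Fin (m+1) =>
    if (i : ℕ) = (j : ℕ) then d i
    else if (i : ℕ) + 1 = m + 1 then -(cc (j : ℕ))
    else if (j : ℕ) = (i : ℕ) + 1 then 1 else 0), fun i => by simp, ?_⟩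
  have hchar : Matrix.charmatrix (Matrix.of (fun i j : Fin (m+1) =>
      if (i : ℕ) = (j : ℕ) then d i
      else if (i : ℕ) + 1 = m + 1 then -(cc (j : ℕ))
      else if (j : ℕ) = (i : ℕ) + 1 then 1 else 0))
      = Matrix.of (fun i j : Fin (m+1) =>
      if (i : ℕ) = (j : ℕ) then (fun k => X - C (d' k)) (i : ℕ)
      else if (i : ℕ) + 1 = m + 1 then (fun k => (C (cc k) : ℂ[X])) (j : ℕ)
      else if (j : ℕ) = (i : ℕ) + 1 then -1 else 0) := by
    funext i j
    by_cases hij : i = j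
    · subst hij
      rw [Matrix.charmatrix_apply_eq]
      simp [hd'val]
    · have hij' : (i : ℕ) ≠ (j : ℕ) := fun hv => hij (Fin.ext hv)
      rw [Matrix.charmatrix_apply_ne _ _ _ hij]
      simp only [Matrix.of_apply, if_neg hij']
      by_cases h2 : (i : ℕ) + 1 = m + 1
      · rw [if_pos h2, if_pos h2]; simp
      · rw [if_neg h2, if_neg h2]
        by_cases h3 : (j : ℕ) = (i : ℕ) + 1
        · rw [if_pos h3, if_pos h3]; simp
        · rw [if_neg h3, if_neg h3]; simp
  rw [Matrix.charpoly, hchar, detN (m+1) (fun k => X - C (d' k)) (fun k => C (cc k))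
    (fun j hj => by show (C (cc j) : ℂ[X]) = 0; rw [hcge j (by omega), map_zero])]
  have h1 : ∏ i ∈ Finset.range (m+1), (X - C (d' i)) = pd := by
    rw [← Fin.prod_univ_eq_prod_range (fun k => X - C (d' k)) (m+1), hpd]
    exact Finset.prod_congr rfl fun i _ => by rw [hd'val]
  have h2 : ∑ j ∈ Finset.range (m+1), C (cc j) * ∏ i ∈ Finset.range j, (X - C (d' i))
      = pl - pd := by
    rw [Finset.sum_range_succ, hcge m le_rfl, map_zero, zero_mul, add_zero]
    rw [Finset.sum_congr rfl (fun j hj => by rw [hclt j (Finset.mem_range.mp hj)])]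
    exact hc.symm
  rw [h1, h2]
  ring
end

section
/- Let λ_1,...,λ_n and d_1,...,d_n be real numbers with λ_1 + ... + λ_n = d_1 + ... + d_n. Then there exists an n×n real matrix A with diagonal entries A_{ii} = d_i for all i and characteristic polynomial ∏_{i=1}^n (t - λ_i). -/
open Polynomial Matrix Finset

noncomputable def Hmat (m : ℕ) (d : ℕ → ℝ) (c : Fin (m+1) → ℝ[X]) :
    Matrix (Fin (m+1)) (Fin (m+1)) ℝ[X] :=
  fun i j => if (i:ℕ) = m then c j
    else if (i:ℕ) = (j:ℕ) then X - C (d (i:ℕ))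
    else if (i:ℕ)+1 = (j:ℕ) then -1 else 0

lemma Hmat_det (m : ℕ) (d : ℕ → ℝ) (c : Fin (m+1) → ℝ[X]) :
    (Hmat m d c).det = ∑ j : Fin (m+1), c j * ∏ i ∈ range (j:ℕ), (X - C (d i)) := by
  induction m generalizing d with
  | zero =>
      rw [Matrix.det_fin_one]
      simp [Hmat]
  | succ m ih =>
      rw [Matrix.det_succ_column_zero, Fin.sum_univ_succ]
      have h0 : (Hmat (m+1) d c).submatrix (Fin.succAbove 0) Fin.succ
          = Hmat m (fun i => d (i+1)) (fun j => c j.succ) := by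
        ext k l
        simp only [Matrix.submatrix_apply, Hmat, Fin.succAbove_zero, Fin.val_succ]
        by_cases h1 : (k:ℕ) = m <;> by_cases h2 : (k:ℕ) = (l:ℕ) <;>
          simp [h1, h2] <;> omega
      rw [h0, ih]
      have h00 : Hmat (m+1) d c 0 0 = X - C (d 0) := by simp [Hmat]
      have hrest : ∀ i : Fin (m+1), i ≠ Fin.last m →
          (-1:ℝ[X]) ^ ((i.succ : Fin (m+2)):ℕ) * Hmat (m+1) d c i.succ 0 *
            ((Hmat (m+1) d c).submatrix (Fin.succAbove i.succ) Fin.succ).det = 0 := by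
        intro i hi
        have : Hmat (m+1) d c i.succ 0 = 0 := by
          have hlt : (i:ℕ) < m := lt_of_le_of_ne (Nat.lt_succ_iff.mp i.isLt)
            (fun h => hi (Fin.ext h))
          simp [Hmat, Fin.val_succ]
          omega
        simp [this]
      rw [Finset.sum_eq_single (Fin.last m) (fun i _ hi => hrest i hi)
        (fun h => absurd (Finset.mem_univ _) h)]
      have hlast0 : Hmat (m+1) d c (Fin.last m).succ 0 = c 0 := by
        simp [Hmat, Fin.val_succ, Fin.val_last]
      have hS : ((Hmat (m+1) d c).submatrix (Fin.succAbove (Fin.last m).succ) Fin.succ).det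
          = (-1 : ℝ[X]) ^ (m+1) := by
        have hsucc : (Fin.last m).succ = Fin.last (m+1) := rfl
        rw [hsucc, Matrix.det_of_lowerTriangular]
        · have hdiag : ∀ k : Fin (m+1),
              (Hmat (m+1) d c).submatrix (Fin.last (m+1)).succAbove Fin.succ k k = -1 := by
            intro k
            simp only [Matrix.submatrix_apply, Hmat, Fin.succAbove_last, Fin.val_succ,
              Fin.coe_castSucc]
            have h1 : ¬ ((k:ℕ) = m + 1) := by omega
            have h2 : ¬ ((k:ℕ) = (k:ℕ) + 1) := by omega
            simp [h1, h2]
          rw [Finset.prod_congr rfl (fun k _ => hdiag k), Finset.prod_const]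
          simp
        · intro k l hkl
          have hkl' : (k:ℕ) < (l:ℕ) := hkl
          simp only [Matrix.submatrix_apply, Hmat, Fin.succAbove_last, Fin.val_succ,
            Fin.coe_castSucc]
          have h1 : ¬ ((k:ℕ) = m + 1) := by omega
          have h2 : ¬ ((k:ℕ) = (l:ℕ) + 1) := by omega
          have h3 : ¬ ((k:ℕ) + 1 = (l:ℕ) + 1) := by omega
          simp [h1, h2, h3, Nat.ne_of_lt hkl']
      rw [hlast0, hS, h00]
      have hval : (((Fin.last m).succ : Fin (m+2)) : ℕ) = m + 1 := rfl
      rw [hval, Fin.sum_univ_succ (f := fun j : Fin (m+2) => c j * ∏ i ∈ range (j:ℕ), (X - C (d i)))]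
      have key : ∀ j : Fin (m+1),
          (X - C (d 0)) * (c j.succ * ∏ i ∈ range (j:ℕ), (X - C (d (i+1))))
            = c j.succ * ∏ i ∈ range ((j:ℕ)+1), (X - C (d i)) := by
        intro j
        rw [Finset.prod_range_succ']
        ring
      simp only [Fin.val_zero, pow_zero, one_mul, range_zero, prod_empty, mul_one,
        Fin.val_succ]
      have hpow : ((-1:ℝ[X]) ^ (m+1)) * c 0 * (-1)^(m+1) = c 0 := by
        rw [mul_comm, ← mul_assoc, ← pow_add, ← two_mul, pow_mul]
        simp
      rw [hpow, add_comm]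
      congr 1
      rw [Finset.mul_sum]
      exact Finset.sum_congr rfl (fun j _ => key j)

lemma basis_expand (m : ℕ) (p : ℕ → ℝ[X]) (hm : ∀ j, (p j).Monic)
    (hd : ∀ j, (p j).natDegree = j) :
    ∀ r : ℝ[X], r.degree < (m:ℕ) → ∃ a : Fin m → ℝ, r = ∑ j : Fin m, C (a j) * p (j:ℕ) := by
  induction m with
  | zero =>
      intro r hr
      refine ⟨fun j => 0, ?_⟩
      have : r = 0 := by
        apply Polynomial.ext
        intro k
        exact (Polynomial.degree_lt_iff_coeff_zero r 0).mp (by exact_mod_cast hr) k (Nat.zero_le k)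
      simp [this]
  | succ m ih =>
      intro r hr
      set b := r.coeff m with hb
      have hcoeff : ∀ k, m ≤ k → (r - C b * p m).coeff k = 0 := by
        intro k hk
        rcases eq_or_lt_of_le hk with he | hl
        · simp [coeff_sub, ← he, hb, coeff_C_mul]
          rw [show (p m).coeff m = 1 by
            have := (hm m).coeff_natDegree
            rwa [hd m] at this]
          ring
        · have h1 : r.coeff k = 0 := by
            apply Polynomial.coeff_eq_zero_of_degree_lt
            exact lt_of_lt_of_le hr (by exact_mod_cast hl)
          have h2 : (p m).coeff k = 0 := by
            apply Polynomial.coeff_eq_zero_of_natDegree_lt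
            rw [hd m]; exact hl
          simp [coeff_sub, coeff_C_mul, h1, h2]
      have hdeg : (r - C b * p m).degree < (m : ℕ) :=
        (Polynomial.degree_lt_iff_coeff_zero _ m).mpr (fun k hk => hcoeff k hk)
      obtain ⟨a', ha'⟩ := ih (r - C b * p m) hdeg
      refine ⟨Fin.snoc a' b, ?_⟩
      rw [Fin.sum_univ_castSucc]
      simp only [Fin.snoc_castSucc, Fin.snoc_last, Fin.coe_castSucc, Fin.val_last]
      rw [← ha']
      ring

theorem stmt9 (n : ℕ) (l d : Fin n → ℝ) (h : ∑ i, l i = ∑ i, d i) :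
    ∃ A : Matrix (Fin n) (Fin n) ℝ,
      (∀ i, A i i = d i) ∧ A.charpoly = ∏ i, (X - C (l i)) := by
  cases n with
  | zero =>
      exact ⟨0, fun i => i.elim0, by simp [Matrix.charpoly]⟩
  | succ m =>
      set dd : ℕ → ℝ := fun k => if hk : k < m + 1 then d ⟨k, hk⟩ else 0 with hdd
      set p : ℕ → ℝ[X] := fun j => ∏ i ∈ Finset.range j, (X - C (dd i)) with hp
      have hpm : ∀ j, (p j).Monic := fun j =>
        monic_prod_of_monic _ _ (fun i _ => monic_X_sub_C _)
      have hpd : ∀ j, (p j).natDegree = j := by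
        intro j
        rw [hp]
        rw [Polynomial.natDegree_prod _ _ (fun i _ => X_sub_C_ne_zero _)]
        simp
      set P : ℝ[X] := ∏ i : Fin (m+1), (X - C (l i)) with hP
      set Q : ℝ[X] := ∏ i : Fin (m+1), (X - C (d i)) with hQ
      have hPm : P.Monic := monic_prod_of_monic _ _ (fun i _ => monic_X_sub_C _)
      have hQm : Q.Monic := monic_prod_of_monic _ _ (fun i _ => monic_X_sub_C _)
      have hPd : P.natDegree = m + 1 := by
        rw [hP, Polynomial.natDegree_prod _ _ (fun i _ => X_sub_C_ne_zero _)]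
        simp
      have hQd : Q.natDegree = m + 1 := by
        rw [hQ, Polynomial.natDegree_prod _ _ (fun i _ => X_sub_C_ne_zero _)]
        simp
      set s : ℝ[X] := P - Q with hs
      have hs1 : s.degree < ((m+1 : ℕ) : WithBot ℕ) := by
        have hdeg : P.degree = Q.degree := by
          rw [Polynomial.degree_eq_natDegree hPm.ne_zero,
            Polynomial.degree_eq_natDegree hQm.ne_zero, hPd, hQd]
        have := Polynomial.degree_sub_lt hdeg hPm.ne_zero
          (by rw [hPm.leadingCoeff, hQm.leadingCoeff])
        rwa [Polynomial.degree_eq_natDegree hPm.ne_zero, hPd] at this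
      have hsm : s.coeff m = 0 := by
        have h1 : P.coeff m = -∑ i, l i := by
          have := Polynomial.prod_X_sub_C_nextCoeff (s := Finset.univ) l
          rwa [Polynomial.nextCoeff_of_natDegree_pos (by rw [hPd]; omega), hPd,
            Nat.add_sub_cancel] at this
        have h2 : Q.coeff m = -∑ i, d i := by
          have := Polynomial.prod_X_sub_C_nextCoeff (s := Finset.univ) d
          rwa [Polynomial.nextCoeff_of_natDegree_pos (by rw [hQd]; omega), hQd,
            Nat.add_sub_cancel] at this
        rw [hs, coeff_sub, h1, h2, h]
        ring
      have hs2 : s.degree < (m : ℕ) := by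
        rw [Polynomial.degree_lt_iff_coeff_zero]
        intro k hk
        rcases eq_or_lt_of_le hk with he | hl
        · rw [← he]; exact hsm
        · exact Polynomial.coeff_eq_zero_of_degree_lt
            (lt_of_lt_of_le hs1 (by exact_mod_cast hl))
      obtain ⟨a, ha⟩ := basis_expand m p hpm hpd s hs2
      set aa : Fin (m+1) → ℝ := fun j => if hj : (j:ℕ) < m then a ⟨j, hj⟩ else 0 with haa
      set A : Matrix (Fin (m+1)) (Fin (m+1)) ℝ := fun i j =>
        if (i:ℕ) = (j:ℕ) then d i else if (i:ℕ)+1 = (j:ℕ) then 1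
        else if (i:ℕ) = m then -(aa j) else 0 with hA
      set cc : Fin (m+1) → ℝ[X] := fun j =>
        if (j:ℕ) = m then X - C (d j) else C (aa j) with hcc
      have hchar : Matrix.charmatrix A = Hmat m dd cc := by
        ext i j
        by_cases hij : i = j
        · subst hij
          rw [Matrix.charmatrix_apply_eq]
          by_cases him : (i:ℕ) = m
          · simp [Hmat, hcc, him, hA]
          · simp [Hmat, hcc, him, hA, hdd, i.isLt, Fin.eta, Nat.le_of_lt_succ i.isLt]
        · rw [Matrix.charmatrix_apply_ne _ _ _ hij]
          have hij' : (i:ℕ) ≠ (j:ℕ) := fun hh => hij (Fin.ext hh)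
          by_cases him : (i:ℕ) = m
          · have hjm : (j:ℕ) ≠ m := fun hh => hij' (by omega)
            have h2 : ¬ ((i:ℕ)+1 = (j:ℕ)) := by omega
            have h3 : ¬ (m = (j:ℕ)) := fun hh => hjm hh.symm
            have h4 : ¬ (m+1 = (j:ℕ)) := by omega
            simp [Hmat, hcc, him, hjm, hA, hij', h2, h3, h4, map_neg]
          · by_cases hsup : (i:ℕ)+1 = (j:ℕ)
            · simp [Hmat, hcc, him, hA, hij', hsup]
            · simp [Hmat, hcc, him, hA, hij', hsup]
      have hdet : A.charpoly = ∑ j : Fin (m+1), cc j * p (j:ℕ) := by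
        rw [Matrix.charpoly, hchar, Hmat_det]
      rw [Fin.sum_univ_castSucc] at hdet
      have hccl : cc (Fin.last m) = X - C (d (Fin.last m)) := by simp [hcc]
      have hcc2 : ∀ j : Fin m, cc j.castSucc * p (j.castSucc : ℕ) = C (a j) * p (j : ℕ) := by
        intro j
        have hj : ((j.castSucc : Fin (m+1)) : ℕ) = (j : ℕ) := rfl
        have hjm : (j:ℕ) < m := j.isLt
        simp [hcc, hj, Nat.ne_of_lt hjm, haa, hjm]
      have hQp : (X - C (d (Fin.last m))) * p m = Q := by
        have hddm : dd m = d (Fin.last m) := by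
          simp only [hdd]
          rw [dif_pos (Nat.lt_succ_self m)]
          rfl
        have hQ' : Q = ∏ i ∈ range (m+1), (X - C (dd i)) := by
          rw [hQ, ← Fin.prod_univ_eq_prod_range (fun i => (X - C (dd i))) (m+1)]
          refine Finset.prod_congr rfl (fun i _ => ?_)
          congr 1
          simp [hdd, i.isLt, Nat.not_lt.mpr (Nat.le_of_lt_succ i.isLt)]
        rw [hQ', hp]
        simp only []
        rw [Finset.prod_range_succ, hddm]
        ring
      refine ⟨A, fun i => by simp [hA], ?_⟩
      rw [Finset.sum_congr rfl (fun j _ => hcc2 j)] at hdet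
      rw [hdet, ← ha, hccl]
      simp only [Fin.val_last]
      rw [hQp, hs]
      ring
end
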